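/- Key step in the proof of Lemma 1.1. Let k be an algebraically closed field, V a finite-dimensional k-vector space, n a natural number, A : (Fin n → kˣ) →* GL(V) a rational representation of the torus T = (Fin n → kˣ), and σ a diagonalizable linear automorphism of V with σ ∘ A(t) = A(t) ∘ σ for all t ∈ T. Suppose z ∈ T satisfies the separation condition: for all c, c' ∈ k and all characters χ, χ' : Fin n → ℤ such that the intersection of the σ-eigenspace for c with the weight space V^χ is nonzero and the intersection of the σ-eigenspace for c' with the weight space V^{χ'} is nonzero, the equality c · χ(z) = c' · χ'(z) in k implies c = c' and χ = χ'. Then for every k-subspace V' of V with (σ ∘ A(z))(V') = V', one has σ(V') = V' and A(t)(V') = V' for all t ∈ T. -/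
import Mathlib


/-- The weight space of a torus representation `A : (Fin n → kˣ) →* (Module.End k V)ˣ`
for the character `χ : Fin n → ℤ`. -/
def weightSpace {k V : Type*} [Field k] [AddCommGroup V] [Module k V] {n : ℕ}
    (A : (Fin n → kˣ) →* (Module.End k V)ˣ) (χ : Fin n → ℤ) : Submodule k V :=
  ⨅ t : Fin n → kˣ,
    Module.End.eigenspace (A t : Module.End k V) ((∏ i, (t i) ^ (χ i) : kˣ) : k)

section Aux

variable {k : Type*} [Field k] {V : Type*} [AddCommGroup V] [Module k V] {n : ℕ}

lemma mem_weightSpace_iff (A : (Fin n → kˣ) →* (Module.End k V)ˣ) (χ : Fin n → ℤ) (v : V) :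
    v ∈ weightSpace A χ ↔
      ∀ t, (A t : Module.End k V) v = ((∏ i, (t i) ^ (χ i) : kˣ) : k) • v := by
  simp [weightSpace, Submodule.mem_iInf, Module.End.mem_eigenspace_iff]

lemma map_eq_self_of_scalar {f : Module.End k V} {U : Submodule k V} {c : k} (hc : c ≠ 0)
    (h : ∀ v ∈ U, f v = c • v) : Submodule.map f U = U := by
  apply le_antisymm
  · rintro _ ⟨v, hv, rfl⟩
    rw [h v hv]
    exact U.smul_mem _ hv
  · intro u hu
    exact ⟨c⁻¹ • u, U.smul_mem _ hu, by
      rw [map_smul, h u hu, smul_smul, inv_mul_cancel₀ hc, one_smul]⟩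

end Aux

/-- Key step in the proof of Lemma 1.1: if `z` separates the pairs `(c, χ)` occurring in
the joint eigenspace decomposition of `σ` and the torus action (i.e. `c • χ(z)` determines
`(c, χ)` whenever the corresponding joint eigenspace is nonzero), then every subspace
invariant under `σ ∘ A z` is invariant under `σ` and under the whole torus action. -/
theorem rigid_strata_lemma_1_1_key_step
    {k : Type*} [Field k] [IsAlgClosed k]
    {V : Type*} [AddCommGroup V] [Module k V] [FiniteDimensional k V]
    (n : ℕ) (A : (Fin n → kˣ) →* (Module.End k V)ˣ)
    (hA : (⨆ χ : Fin n → ℤ, weightSpace A χ) = ⊤)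
    (σ : (Module.End k V)ˣ)
    (hσ : (⨆ c : k, Module.End.eigenspace (σ : Module.End k V) c) = ⊤)
    (hcomm : ∀ t : Fin n → kˣ,
      (σ : Module.End k V) * (A t : Module.End k V)
        = (A t : Module.End k V) * (σ : Module.End k V))
    (z : Fin n → kˣ)
    (hz : ∀ (c c' : k) (χ χ' : Fin n → ℤ),
      Module.End.eigenspace (σ : Module.End k V) c ⊓ weightSpace A χ ≠ ⊥ →
      Module.End.eigenspace (σ : Module.End k V) c' ⊓ weightSpace A χ' ≠ ⊥ →
      c * ((∏ i, (z i) ^ (χ i) : kˣ) : k) = c' * ((∏ i, (z i) ^ (χ' i) : kˣ) : k) →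
      c = c' ∧ χ = χ') :
    ∀ V' : Submodule k V,
      Submodule.map ((σ : Module.End k V) * (A z : Module.End k V)) V' = V' →
        Submodule.map (σ : Module.End k V) V' = V' ∧
        ∀ t : Fin n → kˣ, Submodule.map (A t : Module.End k V) V' = V' := by
  classical
  intro V' hV'
  set σE : Module.End k V := (σ : Module.End k V) with hσE
  set E : k × (Fin n → ℤ) → Submodule k V :=
    fun p => Module.End.eigenspace σE p.1 ⊓ weightSpace A p.2 with hE
  set τ : Module.End k V := σE * (A z : Module.End k V) with hτdef
  set μf : k × (Fin n → ℤ) → k :=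
    fun p => p.1 * ((∏ i, (z i) ^ (p.2 i) : kˣ) : k) with hμf
  -- weight spaces are invariant under σ
  have hWinv : ∀ χ : Fin n → ℤ, ∀ v ∈ weightSpace A χ, σE v ∈ weightSpace A χ := by
    intro χ v hv
    rw [mem_weightSpace_iff] at hv ⊢
    intro t
    have h1 : (A t : Module.End k V) (σE v) = σE ((A t : Module.End k V) v) := by
      calc (A t : Module.End k V) (σE v) = ((A t : Module.End k V) * σE) v := rfl
        _ = (σE * (A t : Module.End k V)) v := by rw [hcomm t]
        _ = σE ((A t : Module.End k V) v) := rfl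
    rw [h1, hv t, map_smul]
  -- the joint eigenspaces span
  have htop : (⨆ p, E p) = ⊤ := by
    rw [← top_le_iff, ← hA]
    apply iSup_le
    intro χ
    have hdec : weightSpace A χ = ⨆ c, weightSpace A χ ⊓ Module.End.eigenspace σE c :=
      Submodule.eq_iSup_inf_genEigenspace 1 (hWinv χ) hσ
    rw [hdec]
    exact iSup_le fun c => le_iSup_of_le (c, χ) (le_inf inf_le_right inf_le_left)
  -- each joint eigenspace lies in an eigenspace of τ
  have hEτ : ∀ p, E p ≤ Module.End.eigenspace τ (μf p) := by
    rintro ⟨c, χ⟩ v ⟨hv1, hv2⟩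
    simp only [SetLike.mem_coe, Module.End.mem_eigenspace_iff] at hv1 ⊢
    simp only [SetLike.mem_coe, mem_weightSpace_iff] at hv2
    calc τ v = σE ((A z : Module.End k V) v) := rfl
      _ = σE (((∏ i, (z i) ^ (χ i) : kˣ) : k) • v) := by rw [hv2 z]
      _ = ((∏ i, (z i) ^ (χ i) : kˣ) : k) • σE v := by rw [map_smul]
      _ = μf (c, χ) • v := by rw [hv1, smul_smul, mul_comm]
  have hτtop : (⨆ μ, Module.End.eigenspace τ μ) = ⊤ := by
    rw [← top_le_iff, ← htop]
    exact iSup_le fun p => le_iSup_of_le (μf p) (hEτ p)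
  -- every eigenspace of τ lies in a single joint eigenspace, with nonzero σ-eigenvalue
  have hkey : ∀ μ : k, ∃ (c : k) (χ : Fin n → ℤ), c ≠ 0 ∧
      Module.End.eigenspace τ μ ≤ Module.End.eigenspace σE c ⊓ weightSpace A χ := by
    intro μ
    have hXle : (⨆ p, ⨆ _ : μf p = μ, E p) ≤ Module.End.eigenspace τ μ :=
      iSup₂_le fun p hp => hp ▸ hEτ p
    have hFX : Module.End.eigenspace τ μ = ⨆ p, ⨆ _ : μf p = μ, E p := by
      have hsplit : (⨆ p, ⨆ _ : μf p = μ, E p) ⊔ (⨆ p, ⨆ _ : ¬ μf p = μ, E p) = ⊤ := by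
        rw [← iSup_split E (fun p => μf p = μ), htop]
      have hY : (⨆ p, ⨆ _ : ¬ μf p = μ, E p) ⊓ Module.End.eigenspace τ μ = ⊥ := by
        rw [← le_bot_iff]
        calc (⨆ p, ⨆ _ : ¬ μf p = μ, E p) ⊓ Module.End.eigenspace τ μ
            ≤ (⨆ μ' : k, ⨆ _ : μ' ≠ μ, Module.End.eigenspace τ μ')
                ⊓ Module.End.eigenspace τ μ := by
              exact inf_le_inf_right _
                (iSup₂_le fun p hp => le_iSup₂_of_le (μf p) hp (hEτ p))
          _ ≤ ⊥ := ((Module.End.eigenspaces_iSupIndep τ μ).symm.eq_bot).le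
      calc Module.End.eigenspace τ μ
          = ((⨆ p, ⨆ _ : μf p = μ, E p) ⊔ (⨆ p, ⨆ _ : ¬ μf p = μ, E p))
              ⊓ Module.End.eigenspace τ μ := by rw [hsplit, top_inf_eq]
        _ = (⨆ p, ⨆ _ : μf p = μ, E p)
              ⊔ ((⨆ p, ⨆ _ : ¬ μf p = μ, E p) ⊓ Module.End.eigenspace τ μ) :=
            sup_inf_assoc_of_le _ hXle
        _ = ⨆ p, ⨆ _ : μf p = μ, E p := by rw [hY, sup_bot_eq]
    by_cases hbot : ∀ p, μf p = μ → E p = ⊥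
    · refine ⟨1, 0, one_ne_zero, ?_⟩
      rw [hFX]
      exact iSup₂_le fun p hp => by rw [hbot p hp]; exact bot_le
    · push_neg at hbot
      obtain ⟨p₀, hp₀μ, hp₀⟩ := hbot
      have hc0 : p₀.1 ≠ 0 := by
        intro h0
        apply hp₀
        rw [eq_bot_iff]
        rintro v ⟨hv1, -⟩
        simp only [SetLike.mem_coe, Module.End.mem_eigenspace_iff, h0, zero_smul] at hv1
        have hv0 : v = 0 := by
          have hinj : ((σ⁻¹ : (Module.End k V)ˣ) : Module.End k V) (σE v) = v := by
            rw [hσE, ← Module.End.mul_apply, ← Units.val_mul, inv_mul_cancel,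
              Units.val_one, Module.End.one_apply]
          rw [← hinj, hv1, map_zero]
        simp [hv0]
      refine ⟨p₀.1, p₀.2, hc0, ?_⟩
      rw [hFX]
      apply iSup₂_le
      intro q hq
      by_cases hqbot : E q = ⊥
      · rw [hqbot]; exact bot_le
      · have heq := hz q.1 p₀.1 q.2 p₀.2 hqbot hp₀ (by
          have : μf q = μf p₀ := by rw [hq, hp₀μ]
          simpa [hμf] using this)
        have hqp : q = p₀ := Prod.ext heq.1 heq.2
        rw [hqp]
  -- V' is invariant under τ, so decomposes along eigenspaces of τ
  have hV'le : ∀ x ∈ V', τ x ∈ V' := by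
    intro x hx
    rw [← hV']
    exact Submodule.mem_map_of_mem hx
  have hdecV' : V' = ⨆ μ, V' ⊓ Module.End.eigenspace τ μ :=
    Submodule.eq_iSup_inf_genEigenspace 1 hV'le hτtop
  constructor
  · conv_lhs => rw [hdecV']
    conv_rhs => rw [hdecV']
    rw [Submodule.map_iSup]
    refine iSup_congr fun μ => ?_
    obtain ⟨c, χ, hc, hle⟩ := hkey μ
    refine map_eq_self_of_scalar hc fun v hv => ?_
    have h1 := (hle hv.2).1
    simpa only [SetLike.mem_coe, Module.End.mem_eigenspace_iff] using h1
  · intro t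
    conv_lhs => rw [hdecV']
    conv_rhs => rw [hdecV']
    rw [Submodule.map_iSup]
    refine iSup_congr fun μ => ?_
    obtain ⟨c, χ, hc, hle⟩ := hkey μ
    refine map_eq_self_of_scalar (c := ((∏ i, (t i) ^ (χ i) : kˣ) : k))
      (Units.ne_zero _) fun v hv => ?_
    have h1 := (hle hv.2).2
    simp only [SetLike.mem_coe, mem_weightSpace_iff] at h1
    exact h1 t
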